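/- Let v₁, v₂, v₃ ∈ ℝ² satisfy v₁ + v₂ + v₃ = 0 and ∑ₗ vₗ·vₗᵗ = ρ·I₂ for some ρ ≠ 0 (i.e. the 2×3 matrix U with columns v₁, v₂, v₃ satisfies U·Uᵗ = ρ·I₂). Then ‖v₁‖ = ‖v₂‖ = ‖v₃‖. -/

import Mathlib

lemma key8 (a0 a1 a2 b0 b1 b2 ρ : ℝ)
    (ha : a0 + a1 + a2 = 0) (hb : b0 + b1 + b2 = 0)
    (hA : a0^2 + a1^2 + a2^2 = ρ) (hB : b0^2 + b1^2 + b2^2 = ρ)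
    (hC : a0*b0 + a1*b1 + a2*b2 = 0) :
    a0^2 + b0^2 = a1^2 + b1^2 := by
  have ha2 : a2 = -a0 - a1 := by linarith
  have hb2 : b2 = -b0 - b1 := by linarith
  subst ha2 hb2
  have hP : (a0^2 + a1^2 + a0*a1) - (b0^2 + b1^2 + b0*b1) = 0 := by
    have := hA.trans hB.symm; ring_nf; ring_nf at this; linarith
  have hQ : 2*a0*b0 + 2*a1*b1 + a0*b1 + a1*b0 = 0 := by
    ring_nf; ring_nf at hC; linarith
  have h3 : (a0^2 + b0^2)^3 = (a1^2 + b1^2)^3 := by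
    linear_combination ((a0^3 - 3*a0*b0^2 + a1^3 - 3*a1*b1^2)*(a0-a1)
        + (3*a0^2*b0 - b0^3 + 3*a1^2*b1 - b1^3)*(b0-b1)) * hP
      + (-(a0^3 - 3*a0*b0^2 + a1^3 - 3*a1*b1^2)*(b0-b1)
        + (3*a0^2*b0 - b0^3 + 3*a1^2*b1 - b1^3)*(a0-a1)) * hQ
  have hinj : Function.Injective (fun x : ℝ => x ^ 3) :=
    (Odd.strictMono_pow (R := ℝ) ⟨1, by norm_num⟩).injective
  exact hinj h3

theorem stmt8 (v : Fin 3 → EuclideanSpace ℝ (Fin 2)) (ρ : ℝ) (hρ : ρ ≠ 0)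
    (hsum : ∑ l, v l = 0)
    (hconf : ∀ i j : Fin 2, ∑ l, v l i * v l j = ρ * (if i = j then 1 else 0)) :
    ‖v 0‖ = ‖v 1‖ ∧ ‖v 1‖ = ‖v 2‖ := by
  have hcomp : ∀ i : Fin 2, v 0 i + v 1 i + v 2 i = 0 := by
    intro i
    have := congrArg (fun w : EuclideanSpace ℝ (Fin 2) => w i) hsum
    simpa [Fin.sum_univ_three] using this
  have hA := hconf 0 0
  have hB := hconf 1 1
  have hC := hconf 0 1
  simp [Fin.sum_univ_three] at hA hB hC
  set a0 := v 0 0; set a1 := v 1 0; set a2 := v 2 0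
  set b0 := v 0 1; set b1 := v 1 1; set b2 := v 2 1
  have ha := hcomp 0
  have hb := hcomp 1
  have hA' : a0^2 + a1^2 + a2^2 = ρ := by linear_combination hA
  have hB' : b0^2 + b1^2 + b2^2 = ρ := by linear_combination hB
  have h01 : a0^2 + b0^2 = a1^2 + b1^2 := key8 a0 a1 a2 b0 b1 b2 ρ ha hb hA' hB' hC
  have h12 : a1^2 + b1^2 = a2^2 + b2^2 :=
    key8 a1 a2 a0 b1 b2 b0 ρ (by linarith) (by linarith)
      (by linear_combination hA') (by linear_combination hB') (by linear_combination hC)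
  have norm_eq : ∀ l : Fin 3, ‖v l‖ = Real.sqrt ((v l 0)^2 + (v l 1)^2) := by
    intro l
    rw [EuclideanSpace.norm_eq]
    congr 1
    simp [Fin.sum_univ_two, sq]
  constructor
  · rw [norm_eq 0, norm_eq 1, h01]
  · rw [norm_eq 1, norm_eq 2, h12]
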